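/- Let ε > 0, let I ⊆ ℝ be an interval, let κ : I → ℝ be twice continuously differentiable, and define z = κ/√(κ² + ε). Then z is twice continuously differentiable, and the following are equivalent on I: (i) κ''(s) − κ(s)³ − 3κ(s)(κ'(s))²/(κ(s)² + ε) = ε·κ(s) for all s ∈ I; (ii) z''(s) = ε·z(s) for all s ∈ I. In that case, for any s₀ ∈ I and all s ∈ I, z(s) = z(s₀)·cosh(√ε·(s − s₀)) + (z'(s₀)/√ε)·sinh(√ε·(s − s₀)). Moreover the identity κ(s)² = ε·z(s)²/(1 − z(s)²) holds for all s ∈ I. -/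

import Mathlib

/-!
STATEMENT 16: Let ε > 0, I an interval, κ : I → ℝ twice continuously differentiable and
z = κ/√(κ² + ε).  Then z is twice (continuously) differentiable, with
z' = εκ'/(κ²+ε)^{3/2} and z'' = ε(κ'' − 3κ(κ')²/(κ²+ε))/(κ²+ε)^{3/2}, and
(i) κ'' − κ³ − 3κ(κ')²/(κ²+ε) = εκ on I  ⟺  (ii) z'' = εz on I.
In that case z(s) = z(s₀)cosh(√ε(s−s₀)) + (z'(s₀)/√ε)sinh(√ε(s−s₀)) for s₀, s ∈ I.
Moreover κ² = εz²/(1 − z²) on I.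
(The interval I is encoded as a convex subset of ℝ.)
-/

/-- The normalized curvature `z = κ/√(κ² + ε)`. -/
noncomputable def zfun (ε : ℝ) (κ : ℝ → ℝ) (s : ℝ) : ℝ :=
  κ s / Real.sqrt ((κ s) ^ 2 + ε)

/-- The derivative of the normalized curvature: `z' = εκ'/(κ²+ε)^{3/2}`. -/
noncomputable def zdfun (ε : ℝ) (κ κd : ℝ → ℝ) (s : ℝ) : ℝ :=
  ε * κd s / ((κ s) ^ 2 + ε) ^ ((3 : ℝ) / 2)

theorem stmt_16 (ε : ℝ) (hε : 0 < ε) (I : Set ℝ) (hI : Convex ℝ I)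
    (κ κd κdd : ℝ → ℝ)
    (hκ : ∀ s ∈ I, HasDerivAt κ (κd s) s)
    (hκd : ∀ s ∈ I, HasDerivAt κd (κdd s) s) :
    -- z is twice differentiable on I, with the explicit first and second derivatives
    (∀ s ∈ I, HasDerivAt (zfun ε κ) (zdfun ε κ κd s) s) ∧
    (∀ s ∈ I, HasDerivAt (zdfun ε κ κd)
        (ε * (κdd s - 3 * κ s * (κd s) ^ 2 / ((κ s) ^ 2 + ε))
          / ((κ s) ^ 2 + ε) ^ ((3 : ℝ) / 2)) s) ∧
    -- (i) ⟺ (ii)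
    ((∀ s ∈ I, κdd s - (κ s) ^ 3 - 3 * κ s * (κd s) ^ 2 / ((κ s) ^ 2 + ε) = ε * κ s) ↔
      (∀ s ∈ I, HasDerivAt (zdfun ε κ κd) (ε * zfun ε κ s) s)) ∧
    -- in that case, the cosh/sinh formula
    ((∀ s ∈ I, HasDerivAt (zdfun ε κ κd) (ε * zfun ε κ s) s) →
      ∀ s₀ ∈ I, ∀ s ∈ I,
        zfun ε κ s = zfun ε κ s₀ * Real.cosh (Real.sqrt ε * (s - s₀))
          + (zdfun ε κ κd s₀ / Real.sqrt ε) * Real.sinh (Real.sqrt ε * (s - s₀))) ∧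
    -- κ² = εz²/(1 − z²)
    (∀ s ∈ I, (κ s) ^ 2 = ε * (zfun ε κ s) ^ 2 / (1 - (zfun ε κ s) ^ 2)) := by
  have hP : ∀ s, 0 < (κ s) ^ 2 + ε := fun s => by positivity
  set Q : ℝ → ℝ := fun s => Real.sqrt ((κ s) ^ 2 + ε) with hQdef
  have hQpos : ∀ s, 0 < Q s := fun s => Real.sqrt_pos.mpr (hP s)
  have hQ2 : ∀ s, Q s ^ 2 = (κ s) ^ 2 + ε := fun s => Real.sq_sqrt (hP s).le
  have hP32 : ∀ s, ((κ s) ^ 2 + ε) ^ ((3 : ℝ) / 2) = Q s ^ 3 := by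
    intro s
    have h1 : ((κ s) ^ 2 + ε) ^ ((3 : ℝ) / 2)
        = (((κ s) ^ 2 + ε) ^ ((1 : ℝ) / 2)) ^ (3 : ℕ) := by
      rw [← Real.rpow_natCast (((κ s) ^ 2 + ε) ^ ((1 : ℝ) / 2)) 3,
        ← Real.rpow_mul (hP s).le]
      norm_num
    rw [h1, ← Real.sqrt_eq_rpow]
  have hQs : ∀ s, Real.sqrt ((κ s) ^ 2 + ε) = Q s := fun s => rfl
  -- derivative of Q
  have hQd : ∀ s ∈ I, HasDerivAt Q (κ s * κd s / Q s) s := by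
    intro s hs
    have h1 : HasDerivAt (fun t => (κ t) ^ 2 + ε) (2 * κ s * κd s) s := by
      simpa [mul_comm, mul_assoc, mul_left_comm] using ((hκ s hs).pow 2).add_const ε
    have h2 := (Real.hasDerivAt_sqrt (hP s).ne').comp s h1
    refine h2.congr_deriv ?_
    have hq := (hQpos s).ne'
    rw [hQs s]
    field_simp
  -- first derivative of z
  have hz : ∀ s ∈ I, HasDerivAt (zfun ε κ) (zdfun ε κ κd s) s := by
    intro s hs
    have h := (hκ s hs).div (hQd s hs) (hQpos s).ne'
    refine h.congr_deriv ?_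
    unfold zdfun
    rw [hP32 s, show ε = Q s ^ 2 - κ s ^ 2 by have := hQ2 s; linarith]
    have hq := (hQpos s).ne'
    field_simp
  -- second derivative
  have hzd : ∀ s ∈ I, HasDerivAt (zdfun ε κ κd)
      (ε * (κdd s - 3 * κ s * (κd s) ^ 2 / ((κ s) ^ 2 + ε))
        / ((κ s) ^ 2 + ε) ^ ((3 : ℝ) / 2)) s := by
    intro s hs
    have h1 : HasDerivAt (fun t => (κ t) ^ 2 + ε) (2 * κ s * κd s) s := by
      simpa [mul_comm, mul_assoc, mul_left_comm] using ((hκ s hs).pow 2).add_const ε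
    have h2 : HasDerivAt (fun t => ((κ t) ^ 2 + ε) ^ ((3:ℝ)/2))
        (2 * κ s * κd s * ((3:ℝ)/2) * ((κ s) ^ 2 + ε) ^ ((3:ℝ)/2 - 1)) s :=
      h1.rpow_const (Or.inl (hP s).ne')
    have h3 := ((hκd s hs).const_mul ε).div h2 (by rw [hP32 s]; positivity)
    refine h3.congr_deriv ?_
    have h4 : ((κ s) ^ 2 + ε) ^ ((3:ℝ)/2 - 1) = Q s := by
      rw [show ((3:ℝ)/2 - 1) = (1/2 : ℝ) by norm_num, ← Real.sqrt_eq_rpow, hQs s]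
    rw [hP32 s, h4, show ε = Q s ^ 2 - κ s ^ 2 by have := hQ2 s; linarith]
    have hq := (hQpos s).ne'
    field_simp
    ring
  -- the key algebraic identity linking (i) and (ii) pointwise
  have key : ∀ s,
      (ε * (κdd s - 3 * κ s * (κd s) ^ 2 / ((κ s) ^ 2 + ε))
          / ((κ s) ^ 2 + ε) ^ ((3 : ℝ) / 2) = ε * zfun ε κ s)
        ↔ (κdd s - (κ s) ^ 3 - 3 * κ s * (κd s) ^ 2 / ((κ s) ^ 2 + ε) = ε * κ s) := by
    intro s
    have hq := (hQpos s).ne'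
    have hεne := hε.ne'
    unfold zfun
    rw [hP32 s, hQs s]
    constructor
    · intro h
      rw [div_eq_iff (pow_ne_zero 3 hq)] at h
      have hA : κdd s - 3 * κ s * κd s ^ 2 / ((κ s) ^ 2 + ε) = κ s * Q s ^ 2 := by
        apply mul_left_cancel₀ hεne
        rw [h]
        field_simp
      linear_combination hA + κ s * hQ2 s
    · intro h
      have hA : κdd s - 3 * κ s * κd s ^ 2 / ((κ s) ^ 2 + ε) = κ s * Q s ^ 2 := by
        linear_combination h - κ s * hQ2 s
      rw [hA]
      field_simp
  refine ⟨hz, hzd, ?_, ?_, ?_⟩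
  · constructor
    · intro h s hs
      have h2 := hzd s hs
      rwa [(key s).mpr (h s hs)] at h2
    · intro h s hs
      exact (key s).mp ((hzd s hs).unique (h s hs))
  · -- ODE part
    intro hODE s₀ hs₀ s hs
    set q := Real.sqrt ε with hqdef
    have hqpos : 0 < q := Real.sqrt_pos.mpr hε
    have hq2 : q ^ 2 = ε := Real.sq_sqrt hε.le
    have hqne := hqpos.ne'
    set z := zfun ε κ with hzdef
    set zd := zdfun ε κ κd with hzddef
    -- G and H are constant on I
    have hconst : ∀ (f f' : ℝ → ℝ), (∀ t ∈ I, HasDerivAt f (f' t) t) →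
        (∀ t ∈ I, f' t = 0) → f s = f s₀ := by
      intro f f' hf hf0
      have hb := hI.norm_image_sub_le_of_norm_hasDerivWithin_le
        (f' := f') (C := 0)
        (fun t ht => (hf t ht).hasDerivWithinAt)
        (fun t ht => by simp [hf0 t ht]) hs₀ hs
      simp only [zero_mul] at hb
      have := norm_sub_eq_zero_iff.mp (le_antisymm hb (norm_nonneg _))
      exact this
    have hG : (zd s - q * z s) * Real.exp (q * s)
        = (zd s₀ - q * z s₀) * Real.exp (q * s₀) := by
      apply hconst (fun t => (zd t - q * z t) * Real.exp (q * t)) (fun t => 0)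
      · intro t ht
        have h1 : HasDerivAt (fun u => zd u - q * z u) (ε * z t - q * zd t) t :=
          (hODE t ht).sub ((hz t ht).const_mul q)
        have h2 : HasDerivAt (fun u => Real.exp (q * u)) (Real.exp (q * t) * q) t := by
          simpa using (((hasDerivAt_id t).const_mul q).exp)
        have := h1.mul h2
        refine this.congr_deriv ?_
        have : ε = q ^ 2 := hq2.symm
        rw [this]; ring
      · intro t ht; rfl
    have hH : (zd s + q * z s) * Real.exp (-(q * s))
        = (zd s₀ + q * z s₀) * Real.exp (-(q * s₀)) := by
      apply hconst (fun t => (zd t + q * z t) * Real.exp (-(q * t))) (fun t => 0)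
      · intro t ht
        have h1 : HasDerivAt (fun u => zd u + q * z u) (ε * z t + q * zd t) t :=
          (hODE t ht).add ((hz t ht).const_mul q)
        have h2 : HasDerivAt (fun u => Real.exp (-(q * u))) (Real.exp (-(q * t)) * (-q)) t := by
          simpa using (((hasDerivAt_id t).const_mul q).neg.exp)
        have := h1.mul h2
        refine this.congr_deriv ?_
        have : ε = q ^ 2 := hq2.symm
        rw [this]; ring
      · intro t ht; rfl
    -- extract the two exponential relations
    have e1 : zd s - q * z s = (zd s₀ - q * z s₀) * Real.exp (-(q * (s - s₀))) := by
      apply mul_right_cancel₀ (Real.exp_ne_zero (q * s))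
      have h2 : Real.exp (-(q * (s - s₀))) * Real.exp (q * s) = Real.exp (q * s₀) := by
        rw [← Real.exp_add]; ring_nf
      rw [hG, mul_assoc, h2]
    have e2 : zd s + q * z s = (zd s₀ + q * z s₀) * Real.exp (q * (s - s₀)) := by
      apply mul_right_cancel₀ (Real.exp_ne_zero (-(q * s)))
      have h2 : Real.exp (q * (s - s₀)) * Real.exp (-(q * s)) = Real.exp (-(q * s₀)) := by
        rw [← Real.exp_add]; ring_nf
      rw [hH, mul_assoc, h2]
    rw [Real.cosh_eq, Real.sinh_eq]
    have hzs : z s = ((zd s₀ + q * z s₀) * Real.exp (q * (s - s₀))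
        - (zd s₀ - q * z s₀) * Real.exp (-(q * (s - s₀)))) / (2 * q) := by
      rw [eq_div_iff (by positivity : (2 * q : ℝ) ≠ 0)]
      linear_combination e2 - e1
    rw [hzs]
    field_simp
    ring
  · intro s hs
    unfold zfun
    rw [div_pow, hQ2 s]
    have hp := (hP s).ne'
    have h1 : 1 - (κ s) ^ 2 / ((κ s) ^ 2 + ε) = ε / ((κ s) ^ 2 + ε) := by field_simp; ring
    rw [h1]
    field_simp
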